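/- Let (x_t)_{t≥1} ⊂ R^d with ‖x_t‖ ≤ L for all t, and V_t = λI + Σ_{k=1}^{t−1} x_k x_kᵀ with λ > 0. Then for all T, Σ_{t=1}^T ‖x_t‖²_{V_t⁻¹} ≤ 2d log(1 + TL²/(dλ)) + (3dL²/(λ log 2))·log(1 + L²/(λ log 2)). -/

import Mathlib

open Matrix Finset

/-- The design matrix `V_t = λ I + ∑_{k < t} x_k x_kᵀ`. -/
noncomputable def designMatrix {d : ℕ} (lam : ℝ) (x : ℕ → Fin d → ℝ) (t : ℕ) :
    Matrix (Fin d) (Fin d) ℝ :=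
  lam • (1 : Matrix (Fin d) (Fin d) ℝ) + ∑ k ∈ Finset.range t, vecMulVec (x k) (x k)


section Aux
variable {d : ℕ}

lemma dot_self_nonneg (v : Fin d → ℝ) : 0 ≤ v ⬝ᵥ v :=
  Finset.sum_nonneg fun i _ => mul_self_nonneg _

lemma dot_vecMulVec_self (a y : Fin d → ℝ) :
    y ⬝ᵥ (vecMulVec a a) *ᵥ y = (a ⬝ᵥ y) ^ 2 := by
  simp only [dotProduct, mulVec, vecMulVec_apply, sq, Finset.mul_sum, Finset.sum_mul]
  rw [Finset.sum_comm]
  exact Finset.sum_congr rfl fun i _ => Finset.sum_congr rfl fun j _ => by ring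

lemma posSemidef_vecMulVec_self (a : Fin d → ℝ) : (vecMulVec a a).PosSemidef := by
  refine Matrix.PosSemidef.of_dotProduct_mulVec_nonneg ?_ ?_
  · ext i j
    simp [conjTranspose_apply, vecMulVec_apply, mul_comm]
  · intro y
    simp only [star_trivial]
    rw [dot_vecMulVec_self]
    positivity

lemma designMatrix_posDef {lam : ℝ} (hlam : 0 < lam) (x : ℕ → Fin d → ℝ) (t : ℕ) :
    (designMatrix lam x t).PosDef := by
  have h1 : (lam • (1 : Matrix (Fin d) (Fin d) ℝ)).PosDef := by
    rw [smul_one_eq_diagonal]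
    exact Matrix.PosDef.diagonal fun _ => hlam
  have h2 : (∑ k ∈ Finset.range t, vecMulVec (x k) (x k)).PosSemidef := by
    induction t with
    | zero => simpa using Matrix.PosSemidef.zero
    | succ t ih => rw [Finset.sum_range_succ]; exact ih.add (posSemidef_vecMulVec_self (x t))
  exact h1.add_posSemidef h2

lemma designMatrix_succ {lam : ℝ} (x : ℕ → Fin d → ℝ) (t : ℕ) :
    designMatrix lam x (t + 1) = designMatrix lam x t + vecMulVec (x t) (x t) := by
  simp [designMatrix, Finset.sum_range_succ, add_assoc]

lemma quadform_designMatrix {lam : ℝ} (x : ℕ → Fin d → ℝ) (t : ℕ) (y : Fin d → ℝ) :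
    y ⬝ᵥ (designMatrix lam x t) *ᵥ y = lam * (y ⬝ᵥ y) + ∑ k ∈ Finset.range t, (x k ⬝ᵥ y) ^ 2 := by
  induction t with
  | zero => simp [designMatrix, smul_mulVec, dotProduct_smul]
  | succ t ih =>
    rw [designMatrix_succ, add_mulVec, dotProduct_add, ih, dot_vecMulVec_self,
      Finset.sum_range_succ]
    ring

lemma trace_designMatrix {lam : ℝ} (x : ℕ → Fin d → ℝ) (t : ℕ) :
    (designMatrix lam x t).trace = d * lam + ∑ k ∈ Finset.range t, (x k ⬝ᵥ x k) := by
  rw [designMatrix, trace_add, trace_smul, trace_one, trace_sum]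
  have h : ∀ k, (vecMulVec (x k) (x k)).trace = x k ⬝ᵥ x k := fun k => by
    simp [Matrix.trace, Matrix.diag, vecMulVec_apply, dotProduct]
  simp only [h, Fintype.card_fin, smul_eq_mul]
  ring

end Aux
lemma quad_nonneg {A : Matrix (Fin d) (Fin d) ℝ} (hA : A.PosSemidef) (y : Fin d → ℝ) :
    0 ≤ y ⬝ᵥ A *ᵥ y := by
  simpa using hA.dotProduct_mulVec_nonneg y

lemma mulVec_inv_cancel {A : Matrix (Fin d) (Fin d) ℝ} (hA : A.PosDef) (u : Fin d → ℝ) :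
    A *ᵥ (A⁻¹ *ᵥ u) = u := by
  rw [mulVec_mulVec, Matrix.mul_nonsing_inv _ (isUnit_iff_ne_zero.2 hA.det_pos.ne'), one_mulVec]

lemma dot_inv_symm {A : Matrix (Fin d) (Fin d) ℝ} (hA : A.PosDef) (u y : Fin d → ℝ) :
    (A⁻¹ *ᵥ u) ⬝ᵥ (A *ᵥ y) = u ⬝ᵥ y := by
  rw [dotProduct_mulVec, ← mulVec_transpose]
  have ht : Aᵀ = A := by
    have := hA.isHermitian
    rwa [Matrix.IsHermitian, conjTranspose_eq_transpose_of_trivial] at this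
  rw [ht, mulVec_inv_cancel hA]

lemma le_quad_inv {A : Matrix (Fin d) (Fin d) ℝ} (hA : A.PosDef) (u y : Fin d → ℝ) :
    2 * (u ⬝ᵥ y) - y ⬝ᵥ A *ᵥ y ≤ u ⬝ᵥ A⁻¹ *ᵥ u := by
  have h0 : 0 ≤ (A⁻¹ *ᵥ u - y) ⬝ᵥ A *ᵥ (A⁻¹ *ᵥ u - y) := quad_nonneg hA.posSemidef _
  rw [mulVec_sub, mulVec_inv_cancel hA, dotProduct_sub, sub_dotProduct, sub_dotProduct,
    dot_inv_symm hA] at h0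
  have h1 : (A⁻¹ *ᵥ u) ⬝ᵥ u = u ⬝ᵥ A⁻¹ *ᵥ u := dotProduct_comm _ _
  have h2 : y ⬝ᵥ u = u ⬝ᵥ y := dotProduct_comm _ _
  linarith

lemma quad_inv_nonneg {A : Matrix (Fin d) (Fin d) ℝ} (hA : A.PosDef) (u : Fin d → ℝ) :
    0 ≤ u ⬝ᵥ A⁻¹ *ᵥ u := quad_nonneg hA.inv.posSemidef u

lemma quad_inv_le_of_lower {lam L : ℝ} (hlam : 0 < lam)
    {A : Matrix (Fin d) (Fin d) ℝ} (hA : A.PosDef)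
    (hlow : ∀ y, lam * (y ⬝ᵥ y) ≤ y ⬝ᵥ A *ᵥ y) {u : Fin d → ℝ} (hu : u ⬝ᵥ u ≤ L ^ 2) :
    u ⬝ᵥ A⁻¹ *ᵥ u ≤ L ^ 2 / lam := by
  set y := A⁻¹ *ᵥ u with hy
  set f := u ⬝ᵥ y with hf
  have hfy : y ⬝ᵥ A *ᵥ y = f := by
    rw [hy, mulVec_inv_cancel hA, dotProduct_comm]
  have hyy : lam * (y ⬝ᵥ y) ≤ f := by rw [← hfy]; exact hlow y
  have hf0 : 0 ≤ f := quad_inv_nonneg hA u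
  have hL2 : (0:ℝ) ≤ L ^ 2 := le_trans (dot_self_nonneg u) hu
  have hcs : f ^ 2 ≤ (u ⬝ᵥ u) * (y ⬝ᵥ y) := by
    rw [hf]
    simpa [dotProduct, pow_two] using Finset.sum_mul_sq_le_sq_mul_sq Finset.univ u y
  rcases eq_or_lt_of_le hf0 with h | h
  · rw [← h]; positivity
  · have hyy' : y ⬝ᵥ y ≤ f / lam := by
      rw [le_div_iff₀ hlam]; linarith [hyy]
    have h3 : f * f ≤ (L ^ 2 / lam) * f := by
      have h4 : f ^ 2 ≤ L ^ 2 * (f / lam) :=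
        le_trans hcs (mul_le_mul hu hyy' (dot_self_nonneg y) hL2)
      calc f * f = f ^ 2 := by ring
        _ ≤ L ^ 2 * (f / lam) := h4
        _ = L ^ 2 / lam * f := by ring
    exact le_of_mul_le_mul_right h3 h

lemma det_designMatrix_succ {lam : ℝ} (hlam : 0 < lam) (x : ℕ → Fin d → ℝ) (t : ℕ) :
    (designMatrix lam x (t + 1)).det
      = (designMatrix lam x t).det * (1 + x t ⬝ᵥ (designMatrix lam x t)⁻¹ *ᵥ x t) := by
  have hA := designMatrix_posDef hlam x t
  have hU : IsUnit (designMatrix lam x t).det := isUnit_iff_ne_zero.2 hA.det_pos.ne'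
  rw [designMatrix_succ, vecMulVec_eq Unit, Matrix.det_add_replicateCol_mul_replicateRow hU]
  congr 1
  rw [Matrix.det_unique]
  simp only [Matrix.add_apply, Matrix.one_apply_eq]
  rw [Matrix.mul_assoc, ← Matrix.replicateCol_mulVec, Matrix.replicateRow_mul_replicateCol_apply]

lemma det_designMatrix_prod {lam : ℝ} (hlam : 0 < lam) (x : ℕ → Fin d → ℝ) (T : ℕ) :
    (designMatrix lam x T).det
      = lam ^ d * ∏ t ∈ Finset.range T, (1 + x t ⬝ᵥ (designMatrix lam x t)⁻¹ *ᵥ x t) := by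
  induction T with
  | zero => simp [designMatrix, Matrix.det_smul]
  | succ T ih =>
    rw [det_designMatrix_succ hlam x T, ih, Finset.prod_range_succ]
    ring

lemma trace_eq_sum_eigenvalues {A : Matrix (Fin d) (Fin d) ℝ} (hA : A.IsHermitian) :
    A.trace = ∑ i, hA.eigenvalues i := by
  simpa using hA.trace_eq_sum_eigenvalues

lemma amgm_det {A : Matrix (Fin d) (Fin d) ℝ} (hd : 0 < d) (hA : A.PosDef) :
    A.det ≤ (A.trace / d) ^ d := by
  have hH := hA.isHermitian
  set μ := hH.eigenvalues with hμ
  have hpos : ∀ i, 0 < μ i := hA.eigenvalues_pos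
  have hdet : A.det = ∏ i, μ i := by simpa using hH.det_eq_prod_eigenvalues
  have htr : A.trace = ∑ i, μ i := trace_eq_sum_eigenvalues hH
  set S := ∑ i, μ i with hS
  have hS0 : 0 < S := Finset.sum_pos (fun i _ => hpos i) (by simpa using Finset.univ_nonempty_iff.2 ⟨⟨0, hd⟩⟩)
  set m := S / d with hm
  have hm0 : 0 < m := by positivity
  have key : ∏ i, μ i ≤ ∏ i : Fin d, (m * Real.exp (μ i / m - 1)) := by
    apply Finset.prod_le_prod (fun i _ => (hpos i).le)
    intro i _
    have h1 : (μ i / m - 1) + 1 ≤ Real.exp (μ i / m - 1) := Real.add_one_le_exp _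
    calc μ i = m * (μ i / m) := by field_simp
      _ ≤ m * Real.exp (μ i / m - 1) := by
          apply mul_le_mul_of_nonneg_left _ hm0.le
          linarith
  have hprod : ∏ i : Fin d, (m * Real.exp (μ i / m - 1)) = m ^ d := by
    rw [Finset.prod_mul_distrib, Finset.prod_const, ← Real.exp_sum]
    have : ∑ i : Fin d, (μ i / m - 1) = 0 := by
      rw [Finset.sum_sub_distrib, ← Finset.sum_div]
      simp only [Finset.sum_const, Finset.card_univ, Fintype.card_fin, nsmul_eq_mul, mul_one]
      rw [← hS, hm]
      field_simp
      ring
    rw [this, Real.exp_zero, mul_one]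
    simp [Fintype.card_fin]
  rw [hdet, htr, ← hm]
  calc ∏ i, μ i ≤ ∏ i : Fin d, (m * Real.exp (μ i / m - 1)) := key
    _ = m ^ d := hprod

lemma sum_log_le {lam L : ℝ} (hd : 0 < d) (hlam : 0 < lam) (hL : 0 < L)
    (x : ℕ → Fin d → ℝ) (hx : ∀ t, x t ⬝ᵥ x t ≤ L ^ 2) (T : ℕ) :
    ∑ t ∈ Finset.range T, Real.log (1 + x t ⬝ᵥ (designMatrix lam x t)⁻¹ *ᵥ x t)
      ≤ d * Real.log (1 + T * L ^ 2 / (d * lam)) := by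
  have hdR : (0:ℝ) < d := by exact_mod_cast hd
  set f := fun t => x t ⬝ᵥ (designMatrix lam x t)⁻¹ *ᵥ x t with hf
  have hf0 : ∀ t, 0 ≤ f t := fun t => quad_inv_nonneg (designMatrix_posDef hlam x t) _
  have hprodpos : 0 < ∏ t ∈ Finset.range T, (1 + f t) :=
    Finset.prod_pos fun t _ => by nlinarith [hf0 t]
  have hdet : Real.log ((designMatrix lam x T).det)
      = d * Real.log lam + ∑ t ∈ Finset.range T, Real.log (1 + f t) := by
    rw [det_designMatrix_prod hlam x T, Real.log_mul (by positivity) hprodpos.ne',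
      Real.log_pow, Real.log_prod (fun t _ => by nlinarith [hf0 t])]
  have htr : (designMatrix lam x T).trace ≤ d * lam + T * L ^ 2 := by
    rw [trace_designMatrix]
    have : ∑ k ∈ Finset.range T, (x k ⬝ᵥ x k) ≤ ∑ k ∈ Finset.range T, L ^ 2 :=
      Finset.sum_le_sum fun k _ => hx k
    simp only [Finset.sum_const, Finset.card_range, nsmul_eq_mul] at this
    linarith
  have hPD := designMatrix_posDef hlam x T
  have hdetle : (designMatrix lam x T).det ≤ (lam + T * L ^ 2 / d) ^ d := by
    refine le_trans (amgm_det hd hPD) (pow_le_pow_left₀ ?_ ?_ d)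
    · have h1 : 0 < (designMatrix lam x T).trace := by
        rw [trace_designMatrix]
        have := Finset.sum_nonneg (fun k (_ : k ∈ Finset.range T) => dot_self_nonneg (x k))
        nlinarith
      positivity
    · rw [div_le_iff₀ hdR]
      have : (lam + T * L ^ 2 / d) * d = d * lam + T * L ^ 2 := by field_simp
      rw [this]
      exact htr
  have hlogdet : Real.log ((designMatrix lam x T).det) ≤ d * Real.log (lam + T * L ^ 2 / d) := by
    calc Real.log ((designMatrix lam x T).det) ≤ Real.log ((lam + T * L ^ 2 / d) ^ d) :=
          Real.log_le_log hPD.det_pos hdetle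
      _ = d * Real.log (lam + T * L ^ 2 / d) := by rw [Real.log_pow]
  have hfin : Real.log (lam + T * L ^ 2 / d) - Real.log lam
      = Real.log (1 + T * L ^ 2 / (d * lam)) := by
    rw [← Real.log_div (by positivity) hlam.ne']
    congr 1
    field_simp
  nlinarith [hdet, hlogdet, hfin]

lemma le_two_log {u : ℝ} (h0 : 0 ≤ u) (h1 : u ≤ 1) : u ≤ 2 * Real.log (1 + u) := by
  have hee : Real.exp (1/2) * Real.exp (1/2) = Real.exp 1 := by
    rw [← Real.exp_add]; norm_num
  have he : Real.exp (1/2) ≤ 2 := by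
    nlinarith [Real.exp_one_lt_d9, Real.exp_pos (1/2:ℝ)]
  have hc := convexOn_exp.2 (Set.mem_univ (0:ℝ)) (Set.mem_univ (1/2 : ℝ))
    (by linarith : (0:ℝ) ≤ 1 - u) h0 (by ring)
  simp only [smul_eq_mul, mul_zero, zero_add, Real.exp_zero, mul_one] at hc
  have hexp : Real.exp (u/2) ≤ 1 + u := by
    calc Real.exp (u/2) = Real.exp (u * (1/2)) := by ring_nf
      _ ≤ (1-u) + u * Real.exp (1/2) := hc
      _ ≤ 1 + u := by nlinarith
  have := (Real.le_log_iff_exp_le (by linarith : (0:ℝ) < 1 + u)).2 hexp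
  linarith

lemma solveC {a b u : ℝ} (ha : 0 < a) (hb : 0 < b) (hu : 0 ≤ u)
    (h : u ≤ a * Real.log (1 + b * u)) : u ≤ 3 * a * Real.log (1 + a * b) := by
  have hbu : 0 ≤ b * u := by positivity
  rcases le_or_gt 1 (a * b) with hab | hab
  · set c := 3 * (a * b) with hc
    have hc1 : (1:ℝ) ≤ c := by nlinarith
    have hlog : Real.log (1 + b * u) ≤ Real.log c + b * u / c := by
      have h1 : 1 + b * u ≤ c * (1 + b * u / c) := by
        have hcc : c * (1 + b * u / c) = c + b * u := by field_simp
        rw [hcc]; linarith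
      calc Real.log (1 + b * u) ≤ Real.log (c * (1 + b * u / c)) :=
            Real.log_le_log (by positivity) h1
        _ = Real.log c + Real.log (1 + b * u / c) :=
            Real.log_mul (by positivity) (by positivity)
        _ ≤ Real.log c + b * u / c := by
            have := Real.log_le_sub_one_of_pos (show (0:ℝ) < 1 + b * u / c by positivity)
            linarith
    have h3 : a * (b * u / c) = u / 3 := by
      rw [hc]; field_simp
    have h4 : u ≤ a * Real.log c + u / 3 := by
      calc u ≤ a * (Real.log c + b * u / c) := le_trans h (by nlinarith)
        _ = a * Real.log c + a * (b * u / c) := by ring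
        _ = a * Real.log c + u / 3 := by rw [h3]
    have h5 : Real.log c ≤ 2 * Real.log (1 + a * b) := by
      have : (2:ℝ) * Real.log (1 + a * b) = Real.log ((1 + a * b) ^ 2) := by
        rw [Real.log_pow]; norm_num
      rw [this]
      apply Real.log_le_log (by positivity)
      nlinarith
    nlinarith [Real.log_nonneg hc1]
  · have hlog : Real.log (1 + b * u) ≤ b * u := by
      have := Real.log_le_sub_one_of_pos (show (0:ℝ) < 1 + b * u by positivity)
      linarith
    have h2 : u ≤ a * b * u := le_trans h (by nlinarith)
    have hu0 : u = 0 := by nlinarith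
    rw [hu0]
    have := Real.log_nonneg (show (1:ℝ) ≤ 1 + a * b by nlinarith)
    nlinarith

lemma quadform_lower {lam : ℝ} (hlam : 0 < lam) (x : ℕ → Fin d → ℝ) (t : ℕ) :
    ∀ y, lam * (y ⬝ᵥ y) ≤ y ⬝ᵥ (designMatrix lam x t) *ᵥ y := by
  intro y
  rw [quadform_designMatrix]
  have : 0 ≤ ∑ k ∈ Finset.range t, (x k ⬝ᵥ y) ^ 2 :=
    Finset.sum_nonneg fun k _ => sq_nonneg _
  linarith

lemma count_large {lam L : ℝ} (hd : 0 < d) (hlam : 0 < lam) (hL : 0 < L)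
    (x : ℕ → Fin d → ℝ) (hx : ∀ t, x t ⬝ᵥ x t ≤ L ^ 2) (T : ℕ) :
    (((Finset.range T).filter
        (fun t => 1 < x t ⬝ᵥ (designMatrix lam x t)⁻¹ *ᵥ x t)).card : ℝ) * Real.log 2
      ≤ d * Real.log (1 + (((Finset.range T).filter
        (fun t => 1 < x t ⬝ᵥ (designMatrix lam x t)⁻¹ *ᵥ x t)).card : ℝ) * L ^ 2 / (d * lam)) := by
  set S := (Finset.range T).filter
    (fun t => 1 < x t ⬝ᵥ (designMatrix lam x t)⁻¹ *ᵥ x t) with hS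
  set N := S.card with hN
  set e := S.orderIsoOfFin rfl with he
  set τ : ℕ → ℕ := fun i => if h : i < N then (e ⟨i, h⟩ : ℕ) else T + i with hτ
  have hτmono : ∀ i j, i < N → j < N → i < j → τ i < τ j := by
    intro i j hi hj hij
    simp only [hτ, dif_pos hi, dif_pos hj]
    have : e ⟨i, hi⟩ < e ⟨j, hj⟩ := e.strictMono (by exact hij)
    exact_mod_cast this
  have hτmem : ∀ i (h : i < N), τ i ∈ S := by
    intro i h
    simp only [hτ, dif_pos h]
    exact (e ⟨i, h⟩).2
  set x' : ℕ → Fin d → ℝ := fun i => if i < N then x (τ i) else 0 with hx'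
  have hx'L : ∀ i, x' i ⬝ᵥ x' i ≤ L ^ 2 := by
    intro i
    by_cases h : i < N
    · simp only [hx', if_pos h]; exact hx _
    · simp only [hx', if_neg h, dotProduct_zero]; positivity
  have key : ∀ j, j < N → 1 < x' j ⬝ᵥ (designMatrix lam x' j)⁻¹ *ᵥ x' j := by
    intro j hj
    set t := τ j with ht
    have htS := hτmem j hj
    rw [hS, Finset.mem_filter] at htS
    obtain ⟨htT, htf⟩ := htS
    have hx'j : x' j = x t := by simp only [hx', if_pos hj, ht]
    set y := (designMatrix lam x t)⁻¹ *ᵥ x t with hy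
    have hft : x t ⬝ᵥ y = x t ⬝ᵥ (designMatrix lam x t)⁻¹ *ᵥ x t := rfl
    have h1 : 2 * (x t ⬝ᵥ y) - y ⬝ᵥ (designMatrix lam x' j) *ᵥ y
        ≤ x t ⬝ᵥ (designMatrix lam x' j)⁻¹ *ᵥ x t :=
      le_quad_inv (designMatrix_posDef hlam x' j) (x t) y
    have h2 : y ⬝ᵥ (designMatrix lam x' j) *ᵥ y ≤ y ⬝ᵥ (designMatrix lam x t) *ᵥ y := by
      rw [quadform_designMatrix, quadform_designMatrix]
      have hsum : ∑ i ∈ Finset.range j, (x' i ⬝ᵥ y) ^ 2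
          ≤ ∑ k ∈ Finset.range t, (x k ⬝ᵥ y) ^ 2 := by
        have hstep : ∑ i ∈ Finset.range j, (x' i ⬝ᵥ y) ^ 2
            = ∑ i ∈ Finset.range j, (x (τ i) ⬝ᵥ y) ^ 2 := by
          refine Finset.sum_congr rfl fun i hi => ?_
          have : i < N := lt_trans (Finset.mem_range.1 hi) hj
          simp only [hx', if_pos this]
        rw [hstep, ← Finset.sum_image (f := fun k => (x k ⬝ᵥ y) ^ 2)
          (g := τ) (s := Finset.range j) ?inj]
        case inj =>
          intro a ha b hb hab
          have ha' : a < N := lt_trans (Finset.mem_range.1 ha) hj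
          have hb' : b < N := lt_trans (Finset.mem_range.1 hb) hj
          by_contra hne
          rcases lt_or_gt_of_ne hne with h | h
          · exact absurd hab (ne_of_lt (by simpa using hτmono a b ha' hb' h))
          · exact absurd hab.symm (ne_of_lt (by simpa using hτmono b a hb' ha' h))
        apply Finset.sum_le_sum_of_subset_of_nonneg
        · intro k hk
          rw [Finset.mem_image] at hk
          obtain ⟨i, hi, rfl⟩ := hk
          rw [Finset.mem_range]
          exact hτmono i j (lt_trans (Finset.mem_range.1 hi) hj) hj (Finset.mem_range.1 hi)
        · exact fun k _ _ => sq_nonneg _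
      linarith
    have h3 : y ⬝ᵥ (designMatrix lam x t) *ᵥ y = x t ⬝ᵥ y := by
      rw [hy, mulVec_inv_cancel (designMatrix_posDef hlam x t), dotProduct_comm]
    rw [hx'j]
    calc (1:ℝ) < x t ⬝ᵥ y := htf
      _ = 2 * (x t ⬝ᵥ y) - y ⬝ᵥ (designMatrix lam x t) *ᵥ y := by rw [h3]; ring
      _ ≤ 2 * (x t ⬝ᵥ y) - y ⬝ᵥ (designMatrix lam x' j) *ᵥ y := by linarith
      _ ≤ x t ⬝ᵥ (designMatrix lam x' j)⁻¹ *ᵥ x t := h1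
  have hsum1 : (N : ℝ) * Real.log 2
      ≤ ∑ j ∈ Finset.range N, Real.log (1 + x' j ⬝ᵥ (designMatrix lam x' j)⁻¹ *ᵥ x' j) := by
    have : ∀ j ∈ Finset.range N,
        Real.log 2 ≤ Real.log (1 + x' j ⬝ᵥ (designMatrix lam x' j)⁻¹ *ᵥ x' j) := by
      intro j hj
      apply Real.log_le_log (by norm_num)
      linarith [key j (Finset.mem_range.1 hj)]
    calc (N : ℝ) * Real.log 2 = ∑ _j ∈ Finset.range N, Real.log 2 := by
          simp [mul_comm]
      _ ≤ _ := Finset.sum_le_sum this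
  have hsum2 := sum_log_le hd hlam hL x' hx'L N
  linarith


/-- **Elliptical potential lemma, untruncated version** (Lemma "Elliptical lemma" 1).
If `‖x_t‖ ≤ L` and `V_t = λI + ∑_{k<t} x_k x_kᵀ` with `λ > 0`, then for all `T`,
`∑_{t<T} ‖x_t‖²_{V_t⁻¹} ≤ 2d log(1 + TL²/(dλ)) + (3dL²/(λ log 2)) log(1 + L²/(λ log 2))`. -/
theorem elliptical_potential_untruncated
    {d : ℕ} (hd : 0 < d) {lam L : ℝ} (hlam : 0 < lam) (hL : 0 < L)
    (x : ℕ → Fin d → ℝ) (hx : ∀ t, Real.sqrt (x t ⬝ᵥ x t) ≤ L) (T : ℕ) :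
    ∑ t ∈ Finset.range T, x t ⬝ᵥ (designMatrix lam x t)⁻¹.mulVec (x t)
      ≤ 2 * d * Real.log (1 + T * L ^ 2 / (d * lam))
        + (3 * d * L ^ 2 / (lam * Real.log 2)) * Real.log (1 + L ^ 2 / (lam * Real.log 2)) := by
  have hdR : (0:ℝ) < d := by exact_mod_cast hd
  have hlog2 : 0 < Real.log 2 := Real.log_pos one_lt_two
  set f : ℕ → ℝ := fun t => x t ⬝ᵥ (designMatrix lam x t)⁻¹ *ᵥ x t with hf
  have hxL2 : ∀ t, x t ⬝ᵥ x t ≤ L ^ 2 := by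
    intro t
    calc x t ⬝ᵥ x t = Real.sqrt (x t ⬝ᵥ x t) ^ 2 := (Real.sq_sqrt (dot_self_nonneg _)).symm
      _ ≤ L ^ 2 := pow_le_pow_left₀ (Real.sqrt_nonneg _) (hx t) 2
  have hf0 : ∀ t, 0 ≤ f t := fun t => quad_inv_nonneg (designMatrix_posDef hlam x t) _
  have hfL : ∀ t, f t ≤ L ^ 2 / lam := fun t =>
    quad_inv_le_of_lower hlam (designMatrix_posDef hlam x t)
      (quadform_lower hlam x t) (hxL2 t)
  set S := (Finset.range T).filter (fun t => 1 < f t) with hS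
  set N := S.card with hN
  -- small part
  have hsmall : ∑ t ∈ (Finset.range T).filter (fun t => ¬ 1 < f t), f t
      ≤ 2 * d * Real.log (1 + T * L ^ 2 / (d * lam)) := by
    have h1 : ∑ t ∈ (Finset.range T).filter (fun t => ¬ 1 < f t), f t
        ≤ ∑ t ∈ (Finset.range T).filter (fun t => ¬ 1 < f t), 2 * Real.log (1 + f t) := by
      refine Finset.sum_le_sum fun t ht => ?_
      rw [Finset.mem_filter] at ht
      exact le_two_log (hf0 t) (not_lt.1 ht.2)
    have h2 : ∑ t ∈ (Finset.range T).filter (fun t => ¬ 1 < f t), 2 * Real.log (1 + f t)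
        ≤ ∑ t ∈ Finset.range T, 2 * Real.log (1 + f t) := by
      apply Finset.sum_le_sum_of_subset_of_nonneg (Finset.filter_subset _ _)
      intro t _ _
      have := Real.log_nonneg (by linarith [hf0 t] : (1:ℝ) ≤ 1 + f t)
      linarith
    have h3 := sum_log_le hd hlam hL x hxL2 T
    calc ∑ t ∈ (Finset.range T).filter (fun t => ¬ 1 < f t), f t
        ≤ ∑ t ∈ Finset.range T, 2 * Real.log (1 + f t) := le_trans h1 h2
      _ = 2 * ∑ t ∈ Finset.range T, Real.log (1 + f t) := by rw [Finset.mul_sum]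
      _ ≤ 2 * (d * Real.log (1 + T * L ^ 2 / (d * lam))) := by linarith
      _ = 2 * d * Real.log (1 + T * L ^ 2 / (d * lam)) := by ring
  -- big part
  have hcount := count_large hd hlam hL x hxL2 T
  have hNbound : (N:ℝ) ≤ 3 * (d / Real.log 2) * Real.log (1 + L ^ 2 / (lam * Real.log 2)) := by
    have ha : (0:ℝ) < d / Real.log 2 := by positivity
    have hb : (0:ℝ) < L ^ 2 / (d * lam) := by positivity
    have harg : (N:ℝ) * L ^ 2 / (d * lam) = (L ^ 2 / (d * lam)) * N := by ring
    have h : (N:ℝ) ≤ (d / Real.log 2) * Real.log (1 + (L ^ 2 / (d * lam)) * N) := by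
      rw [← harg, div_mul_eq_mul_div, le_div_iff₀ hlog2]
      exact hcount
    have hsolve := solveC ha hb (Nat.cast_nonneg N) h
    have hab : (d / Real.log 2) * (L ^ 2 / (d * lam)) = L ^ 2 / (lam * Real.log 2) := by
      field_simp
    rwa [hab] at hsolve
  have hbig : ∑ t ∈ S, f t
      ≤ (3 * d * L ^ 2 / (lam * Real.log 2)) * Real.log (1 + L ^ 2 / (lam * Real.log 2)) := by
    have h1 : ∑ t ∈ S, f t ≤ (N:ℝ) * (L ^ 2 / lam) := by
      calc ∑ t ∈ S, f t ≤ ∑ t ∈ S, L ^ 2 / lam := Finset.sum_le_sum fun t _ => hfL t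
        _ = (N:ℝ) * (L ^ 2 / lam) := by rw [Finset.sum_const, hN, nsmul_eq_mul]
    have h2 : (N:ℝ) * (L ^ 2 / lam)
        ≤ (3 * (d / Real.log 2) * Real.log (1 + L ^ 2 / (lam * Real.log 2))) * (L ^ 2 / lam) := by
      apply mul_le_mul_of_nonneg_right hNbound (by positivity)
    calc ∑ t ∈ S, f t ≤ _ := le_trans h1 h2
      _ = (3 * d * L ^ 2 / (lam * Real.log 2)) * Real.log (1 + L ^ 2 / (lam * Real.log 2)) := by
        field_simp
  have hsplit := Finset.sum_filter_add_sum_filter_not (Finset.range T) (fun t => 1 < f t) f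
  calc ∑ t ∈ Finset.range T, f t
      = ∑ t ∈ S, f t + ∑ t ∈ (Finset.range T).filter (fun t => ¬ 1 < f t), f t := hsplit.symm
    _ ≤ _ := by linarith
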